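/- Let A = (A_1, …, A_m) be a POVM on ℂ^d with all elements nonzero, and let B = (B_1, …, B_n) be a PVM with all elements nonzero. Suppose there is a real matrix Λ with nonnegative entries satisfying Σ_k Λ_{kj} = 1 for every j and B_k = Σ_j Λ_{kj} A_j for every k. Then every entry of Λ is either 0 or 1, and moreover Λ_{kj} = Λ_{kj'} for every k whenever j and j' lie in the same connected component of the transition graph of A (i.e., every PVM that is a coarse graining of A is a grouping of the components of A). -/

import Mathlib

open Matrix
open scoped ComplexOrder

def IsPOVM {d m : ℕ} (A : Fin m → Matrix (Fin d) (Fin d) ℂ) : Prop :=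
  (∀ j, (A j).PosSemidef) ∧ ∑ j, A j = 1

def IsPVM {d m : ℕ} (A : Fin m → Matrix (Fin d) (Fin d) ℂ) : Prop :=
  IsPOVM A ∧ (∀ j, A j * A j = A j) ∧ ∀ j k, j ≠ k → A j * A k = 0

/-- Transition graph of a POVM: distinct `j, k` adjacent iff `tr(A_j A_k) ≠ 0`. -/
def transitionGraph {d m : ℕ} (A : Fin m → Matrix (Fin d) (Fin d) ℂ) :
    SimpleGraph (Fin m) where
  Adj j k := j ≠ k ∧ (A j * A k).trace ≠ 0
  symm := by
    constructor
    intro j k h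
    exact ⟨h.1.symm, by rw [Matrix.trace_mul_comm]; exact h.2⟩
  loopless := by constructor; intro j h; exact h.1 rfl


lemma trace_conjT {d : ℕ} (M : Matrix (Fin d) (Fin d) ℂ) :
    (Mᴴ * M).trace = ((∑ i, ∑ j, Complex.normSq (M j i) : ℝ) : ℂ) := by
  push_cast
  simp [Matrix.trace, Matrix.diag, Matrix.mul_apply, Matrix.conjTranspose_apply,
    Complex.normSq_eq_conj_mul_self]

lemma trace_conjT_nonneg {d : ℕ} (M : Matrix (Fin d) (Fin d) ℂ) :
    0 ≤ (Mᴴ * M).trace := by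
  rw [trace_conjT]
  exact Complex.zero_le_real.mpr <| Finset.sum_nonneg fun i _ =>
    Finset.sum_nonneg fun j _ => Complex.normSq_nonneg _

lemma trace_conjT_ne_zero {d : ℕ} (M : Matrix (Fin d) (Fin d) ℂ) (hM : M ≠ 0) :
    (Mᴴ * M).trace ≠ 0 := by
  rw [trace_conjT]
  intro h
  apply hM
  rw [Complex.ofReal_eq_zero] at h
  have := (Finset.sum_eq_zero_iff_of_nonneg (fun i _ => Finset.sum_nonneg fun j _ =>
    Complex.normSq_nonneg _)).mp h
  ext j i
  have := (Finset.sum_eq_zero_iff_of_nonneg (fun j _ => Complex.normSq_nonneg _)).mp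
    (this i (Finset.mem_univ i)) j (Finset.mem_univ j)
  simpa using Complex.normSq_eq_zero.mp this

open scoped MatrixOrder in
lemma psd_trace_eq {d : ℕ} {X Y : Matrix (Fin d) (Fin d) ℂ}
    (hX : X.PosSemidef) (hY : Y.PosSemidef) :
    (X * Y).trace = ((CFC.sqrt Y * CFC.sqrt X)ᴴ * (CFC.sqrt Y * CFC.sqrt X)).trace := by
  have hXh : (CFC.sqrt X)ᴴ = CFC.sqrt X := (CFC.sqrt_nonneg X).isSelfAdjoint
  have hYh : (CFC.sqrt Y)ᴴ = CFC.sqrt Y := (CFC.sqrt_nonneg Y).isSelfAdjoint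
  rw [conjTranspose_mul, hXh, hYh]
  conv_lhs => rw [← CFC.sqrt_mul_sqrt_self X hX.nonneg, ← CFC.sqrt_mul_sqrt_self Y hY.nonneg]
  rw [Matrix.mul_assoc, Matrix.trace_mul_comm]; simp only [Matrix.mul_assoc]

lemma psd_trace_nonneg {d : ℕ} {X Y : Matrix (Fin d) (Fin d) ℂ}
    (hX : X.PosSemidef) (hY : Y.PosSemidef) : 0 ≤ (X * Y).trace := by
  rw [psd_trace_eq hX hY]; exact trace_conjT_nonneg _

lemma psd_trace_self_ne_zero {d : ℕ} {X : Matrix (Fin d) (Fin d) ℂ}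
    (hX : X.PosSemidef) (h0 : X ≠ 0) : (X * X).trace ≠ 0 := by
  rw [show X * X = Xᴴ * X by rw [hX.1]]
  exact trace_conjT_ne_zero X h0

/-- Every PVM that is a coarse graining of a POVM `A` is a grouping of the
components of `A`: the stochastic matrix has 0/1 entries, constant on the
connected components of the transition graph of `A`. -/
theorem stmt_0 {d m n : ℕ}
    (A : Fin m → Matrix (Fin d) (Fin d) ℂ) (B : Fin n → Matrix (Fin d) (Fin d) ℂ)
    (hA : IsPOVM A) (hA0 : ∀ j, A j ≠ 0)
    (hB : IsPVM B) (hB0 : ∀ k, B k ≠ 0)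
    (Λ : Fin n → Fin m → ℝ)
    (hΛnonneg : ∀ k j, 0 ≤ Λ k j)
    (hΛstoch : ∀ j, ∑ k, Λ k j = 1)
    (hcoarse : ∀ k, B k = ∑ j, (Λ k j : ℂ) • A j) :
    (∀ k j, Λ k j = 0 ∨ Λ k j = 1) ∧
    (∀ k j j', (transitionGraph A).Reachable j j' → Λ k j = Λ k j') := by
  have hT : ∀ j j', 0 ≤ (A j * A j').trace := fun j j' =>
    psd_trace_nonneg (hA.1 j) (hA.1 j')
  have hTd : ∀ j, (A j * A j).trace ≠ 0 := fun j =>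
    psd_trace_self_ne_zero (hA.1 j) (hA0 j)
  have hterm : ∀ (k k' : Fin n) (j j' : Fin m),
      0 ≤ ((Λ k j : ℂ) * (Λ k' j')) * (A j * A j').trace := fun k k' j j' =>
    mul_nonneg (mul_nonneg (Complex.zero_le_real.mpr (hΛnonneg k j))
      (Complex.zero_le_real.mpr (hΛnonneg k' j'))) (hT j j')
  have hexp : ∀ k k', (B k * B k').trace
      = ∑ j, ∑ j', ((Λ k j : ℂ) * (Λ k' j')) * (A j * A j').trace := by
    intro k k'
    rw [hcoarse k, hcoarse k', Finset.sum_mul_sum, Matrix.trace_sum]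
    refine Finset.sum_congr rfl fun j _ => ?_
    rw [Matrix.trace_sum]
    refine Finset.sum_congr rfl fun j' _ => ?_
    rw [Matrix.smul_mul, Matrix.mul_smul, smul_smul, Matrix.trace_smul, smul_eq_mul]
  have hkey : ∀ k k', k ≠ k' → ∀ j j',
      ((Λ k j : ℂ) * (Λ k' j')) * (A j * A j').trace = 0 := by
    intro k k' hkk j j'
    have h0 : ∑ j, ∑ j', ((Λ k j : ℂ) * (Λ k' j')) * (A j * A j').trace = 0 := by
      rw [← hexp, hB.2.2 k k' hkk, Matrix.trace_zero]
    have h1 := (Finset.sum_eq_zero_iff_of_nonneg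
      (fun j _ => Finset.sum_nonneg fun j' _ => hterm k k' j j')).mp h0 j (Finset.mem_univ j)
    exact (Finset.sum_eq_zero_iff_of_nonneg
      (fun j' _ => hterm k k' j j')).mp h1 j' (Finset.mem_univ j')
  have hexcl : ∀ k k' j, k ≠ k' → Λ k j = 0 ∨ Λ k' j = 0 := by
    intro k k' j hkk
    have h := hkey k k' hkk j j
    rcases mul_eq_zero.mp h with h | h
    · rcases mul_eq_zero.mp h with h | h
      · left; exact_mod_cast h
      · right; exact_mod_cast h
    · exact absurd h (hTd j)
  have hone : ∀ j, ∃ k, Λ k j = 1 ∧ ∀ k', k' ≠ k → Λ k' j = 0 := by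
    intro j
    have hne : ∃ k, Λ k j ≠ 0 := by
      by_contra h
      push_neg at h
      have h1 := hΛstoch j
      simp [h] at h1
    obtain ⟨k, hk⟩ := hne
    have hz : ∀ k', k' ≠ k → Λ k' j = 0 := fun k' hk' =>
      (hexcl k k' j (Ne.symm hk')).resolve_left hk
    refine ⟨k, ?_, hz⟩
    have h1 := hΛstoch j
    rwa [Finset.sum_eq_single k (fun b _ hb => hz b hb)
      (fun h => absurd (Finset.mem_univ k) h)] at h1
  have hstep : ∀ k j j', (transitionGraph A).Adj j j' → Λ k j = Λ k j' := by
    intro k j j' hadj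
    obtain ⟨k0, h1, h0⟩ := hone j
    obtain ⟨k1, h1', h0'⟩ := hone j'
    have hk01 : k0 = k1 := by
      by_contra hne
      have h := hkey k0 k1 hne j j'
      rw [h1, h1'] at h
      simp only [Complex.ofReal_one, one_mul] at h
      exact hadj.2 h
    subst hk01
    by_cases hk : k = k0
    · subst hk; rw [h1, h1']
    · rw [h0 k hk, h0' k hk]
  refine ⟨fun k j => ?_, fun k j j' h => ?_⟩
  · obtain ⟨k0, h1, h0⟩ := hone j
    by_cases hk : k = k0
    · subst hk; right; exact h1
    · left; exact h0 k hk
  · obtain ⟨w⟩ := h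
    induction w with
    | nil => rfl
    | cons hadj p ih => exact (hstep k _ _ hadj).trans ih
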